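/- For each of the six representative signatures of the Petersen graph, the chromatic number is chi = 1; the zero-free chromatic number is chi* = 2 for sigma(+P), sigma(P_1), sigma(P_2,2), sigma(P_2,3), sigma(P_3,2), while chi*(P, sigma(P_3,3)) = 1. -/

import Mathlib

open SimpleGraph Finset


/-- Vertices of the Petersen graph: 2-element subsets of `Fin 5`. -/
abbrev PV : Type := {s : Finset (Fin 5) // s.card = 2}

/-- The Petersen graph as the Kneser graph K(5,2). -/
def petersen : SimpleGraph PV where
  Adj a b := Disjoint a.1 b.1
  symm := ⟨fun a b (h : Disjoint a.1 b.1) => h.symm⟩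
  loopless := ⟨fun a (h : Disjoint a.1 a.1) => by
    have h2 := a.2
    rw [disjoint_self.mp h] at h2
    simp at h2⟩

def v12 : PV := ⟨{0, 1}, by decide⟩
def v13 : PV := ⟨{0, 2}, by decide⟩
def v14 : PV := ⟨{0, 3}, by decide⟩
def v15 : PV := ⟨{0, 4}, by decide⟩
def v23 : PV := ⟨{1, 2}, by decide⟩
def v24 : PV := ⟨{1, 3}, by decide⟩
def v25 : PV := ⟨{1, 4}, by decide⟩
def v34 : PV := ⟨{2, 3}, by decide⟩
def v35 : PV := ⟨{2, 4}, by decide⟩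
def v45 : PV := ⟨{3, 4}, by decide⟩

/-- The signature with negative edge set `N` (and all other edges positive). -/
def sgn (N : Finset (Sym2 PV)) : Sym2 PV → ℤˣ := fun e => if e ∈ N then -1 else 1

/-- The six representative signatures `σ(+P)`, `σ(P_1)`, `σ(P_{2,2})`, `σ(P_{2,3})`,
`σ(P_{3,2})`, `σ(P_{3,3})` of the Petersen graph. -/
def reps : Fin 6 → (Sym2 PV → ℤˣ) :=
  ![sgn ∅,
    sgn {s(v12, v34)},
    sgn {s(v14, v25), s(v34, v15)},
    sgn {s(v13, v24), s(v14, v23)},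
    sgn {s(v14, v25), s(v34, v15), s(v24, v35)},
    sgn {s(v12, v34), s(v13, v24), s(v14, v23)}]

/-- A proper `k`-coloration of a signed graph: colors are integers of absolute value at
most `k`, and `κ(w) ≠ σ(vw) κ(v)` for every edge `vw`. -/
def IsProperCol {V : Type*} (G : SimpleGraph V) (σ : Sym2 V → ℤˣ) (k : ℕ) (κ : V → ℤ) : Prop :=
  (∀ v : V, |κ v| ≤ (k : ℤ)) ∧ ∀ u v : V, G.Adj u v → κ v ≠ (σ s(u, v) : ℤ) * κ u

/-- The chromatic number of a signed graph: the least `k` admitting a proper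
`k`-coloration. -/
noncomputable def chromNum {V : Type*} (G : SimpleGraph V) (σ : Sym2 V → ℤˣ) : ℕ :=
  sInf {k | ∃ κ : V → ℤ, IsProperCol G σ k κ}

/-- The zero-free chromatic number of a signed graph: the least `k` admitting a zero-free
proper `k`-coloration. -/
noncomputable def zfChromNum {V : Type*} (G : SimpleGraph V) (σ : Sym2 V → ℤˣ) : ℕ :=
  sInf {k | ∃ κ : V → ℤ, IsProperCol G σ k κ ∧ ∀ v : V, κ v ≠ 0}

/-- The number of proper `k`-colorations of a signed graph. -/
noncomputable def properColCount {V : Type*} (G : SimpleGraph V) (σ : Sym2 V → ℤˣ)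
    (k : ℕ) : ℕ :=
  Set.ncard {κ : V → ℤ | IsProperCol G σ k κ}

/-- The number of zero-free proper `k`-colorations of a signed graph. -/
noncomputable def zfColCount {V : Type*} (G : SimpleGraph V) (σ : Sym2 V → ℤˣ)
    (k : ℕ) : ℕ :=
  Set.ncard {κ : V → ℤ | IsProperCol G σ k κ ∧ ∀ v : V, κ v ≠ 0}

/- ### Auxiliary machinery -/

set_option maxHeartbeats 2000000

instance : DecidableRel petersen.Adj := fun a b => inferInstanceAs (Decidable (Disjoint a.1 b.1))

/-- A cheap numeric encoding of the vertices. -/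
def enc (v : PV) : ℕ := v.1.sum (fun i => 2 ^ i.val)

/-- Build a coloring from a tuple of 10 values, in order
`v12 v13 v14 v15 v23 v24 v25 v34 v35 v45`. -/
def mk10 (c : Fin 10 → ℤ) : PV → ℤ := fun v =>
  match enc v with
  | 3 => c 0 | 5 => c 1 | 9 => c 2 | 17 => c 3 | 6 => c 4
  | 10 => c 5 | 18 => c 6 | 12 => c 7 | 20 => c 8 | _ => c 9

/-- No signature admits a proper 0-coloration. -/
lemma no_zero_col (σ : Sym2 PV → ℤˣ) : ¬ ∃ κ : PV → ℤ, IsProperCol petersen σ 0 κ := by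
  rintro ⟨κ, hb, hp⟩
  have h1 : κ v12 = 0 := by have := abs_le.mp (hb v12); omega
  have h2 : κ v34 = 0 := by have := abs_le.mp (hb v34); omega
  have := hp v12 v34 (by decide)
  rw [h1, h2, mul_zero] at this
  exact this rfl

/-- If a signature has an all-positive pentagon, there is no zero-free proper
1-coloration. -/
lemma no_zf_one (σ : Sym2 PV → ℤˣ) (a b c d e : PV)
    (hab : petersen.Adj a b) (hbc : petersen.Adj b c) (hcd : petersen.Adj c d)
    (hde : petersen.Adj d e) (hea : petersen.Adj e a)
    (sab : (σ s(a, b) : ℤ) = 1) (sbc : (σ s(b, c) : ℤ) = 1)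
    (scd : (σ s(c, d) : ℤ) = 1) (sde : (σ s(d, e) : ℤ) = 1)
    (sea : (σ s(e, a) : ℤ) = 1) :
    ¬ ∃ κ : PV → ℤ, IsProperCol petersen σ 1 κ ∧ ∀ v : PV, κ v ≠ 0 := by
  rintro ⟨κ, ⟨hbd, hp⟩, hz⟩
  have h1 := hp a b hab; rw [sab, one_mul] at h1
  have h2 := hp b c hbc; rw [sbc, one_mul] at h2
  have h3 := hp c d hcd; rw [scd, one_mul] at h3
  have h4 := hp d e hde; rw [sde, one_mul] at h4
  have h5 := hp e a hea; rw [sea, one_mul] at h5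
  have ba := abs_le.mp (hbd a); have bb := abs_le.mp (hbd b)
  have bc := abs_le.mp (hbd c); have bd := abs_le.mp (hbd d)
  have be := abs_le.mp (hbd e)
  have za := hz a; have zb := hz b; have zc := hz c; have zd := hz d; have ze := hz e
  omega

lemma chrom_eq_one (σ : Sym2 PV → ℤˣ) (κ : PV → ℤ) (h : IsProperCol petersen σ 1 κ) :
    chromNum petersen σ = 1 := by
  refine le_antisymm (Nat.sInf_le ⟨κ, h⟩) ?_
  rcases Nat.eq_zero_or_pos (chromNum petersen σ) with h0 | h1
  · rcases Nat.sInf_eq_zero.mp h0 with h0 | h0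
    · exact absurd h0 (no_zero_col σ)
    · exact absurd (Set.eq_empty_iff_forall_notMem.mp h0 1 ⟨κ, h⟩) (fun c => c)
  · exact h1

lemma zf_eq_two (σ : Sym2 PV → ℤˣ) (κ : PV → ℤ)
    (h : IsProperCol petersen σ 2 κ) (hz : ∀ v : PV, κ v ≠ 0)
    (h1 : ¬ ∃ κ : PV → ℤ, IsProperCol petersen σ 1 κ ∧ ∀ v : PV, κ v ≠ 0) :
    zfChromNum petersen σ = 2 := by
  refine le_antisymm (Nat.sInf_le ⟨κ, h, hz⟩) ?_
  refine le_csInf ⟨2, κ, h, hz⟩ ?_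
  rintro m ⟨κ', hm, hz'⟩
  by_contra hlt
  interval_cases m
  · exact (hz' v12) (by have := abs_le.mp (hm.1 v12); omega)
  · exact h1 ⟨κ', hm, hz'⟩

/-- The chromatic number of every representative signed Petersen graph is 1; the
zero-free chromatic number is 2 except for `σ(P_{3,3})`, for which it is 1. -/
theorem petersen_chromatic_numbers :
    (∀ i : Fin 6, chromNum petersen (reps i) = 1) ∧
    zfChromNum petersen (reps 0) = 2 ∧ zfChromNum petersen (reps 1) = 2 ∧
    zfChromNum petersen (reps 2) = 2 ∧ zfChromNum petersen (reps 3) = 2 ∧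
    zfChromNum petersen (reps 4) = 2 ∧ zfChromNum petersen (reps 5) = 1 := by
  refine ⟨?_, ?_, ?_, ?_, ?_, ?_, ?_⟩
  · intro i
    fin_cases i
    · show chromNum petersen (sgn ∅) = 1
      exact chrom_eq_one _ (mk10 ![-1,-1,-1,-1,0,0,0,1,1,1]) ⟨by decide, by decide⟩
    · show chromNum petersen (sgn {s(v12, v34)}) = 1
      exact chrom_eq_one _ (mk10 ![-1,-1,-1,-1,0,0,1,0,1,1]) ⟨by decide, by decide⟩
    · show chromNum petersen (sgn {s(v14, v25), s(v34, v15)}) = 1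
      exact chrom_eq_one _ (mk10 ![-1,-1,-1,0,1,1,0,1,0,0]) ⟨by decide, by decide⟩
    · show chromNum petersen (sgn {s(v13, v24), s(v14, v23)}) = 1
      exact chrom_eq_one _ (mk10 ![-1,-1,-1,-1,0,0,0,1,1,1]) ⟨by decide, by decide⟩
    · show chromNum petersen (sgn {s(v14, v25), s(v34, v15), s(v24, v35)}) = 1
      exact chrom_eq_one _ (mk10 ![-1,-1,-1,0,1,1,0,1,0,0]) ⟨by decide, by decide⟩
    · show chromNum petersen (sgn {s(v12, v34), s(v13, v24), s(v14, v23)}) = 1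
      exact chrom_eq_one _ (mk10 ![-1,-1,-1,-1,0,0,1,0,1,1]) ⟨by decide, by decide⟩
  · show zfChromNum petersen (sgn ∅) = 2
    exact zf_eq_two _ (mk10 ![-2,-2,-2,-2,-1,-1,-1,1,1,1]) ⟨by decide, by decide⟩
      (by decide)
      (no_zf_one _ v12 v34 v15 v23 v45 (by decide) (by decide) (by decide) (by decide)
        (by decide) (by decide) (by decide) (by decide) (by decide) (by decide))
  · show zfChromNum petersen (sgn {s(v12, v34)}) = 2
    exact zf_eq_two _ (mk10 ![-2,-2,-2,-2,-1,-1,-1,1,1,1]) ⟨by decide, by decide⟩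
      (by decide)
      (no_zf_one _ v12 v35 v14 v23 v45 (by decide) (by decide) (by decide) (by decide)
        (by decide) (by decide) (by decide) (by decide) (by decide) (by decide))
  · show zfChromNum petersen (sgn {s(v14, v25), s(v34, v15)}) = 2
    exact zf_eq_two _ (mk10 ![-2,-2,-2,-2,-1,-1,-1,1,1,1]) ⟨by decide, by decide⟩
      (by decide)
      (no_zf_one _ v12 v34 v25 v13 v45 (by decide) (by decide) (by decide) (by decide)
        (by decide) (by decide) (by decide) (by decide) (by decide) (by decide))
  · show zfChromNum petersen (sgn {s(v13, v24), s(v14, v23)}) = 2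
    exact zf_eq_two _ (mk10 ![-2,-2,-2,-2,-1,-1,-1,1,1,1]) ⟨by decide, by decide⟩
      (by decide)
      (no_zf_one _ v12 v34 v15 v23 v45 (by decide) (by decide) (by decide) (by decide)
        (by decide) (by decide) (by decide) (by decide) (by decide) (by decide))
  · show zfChromNum petersen (sgn {s(v14, v25), s(v34, v15), s(v24, v35)}) = 2
    exact zf_eq_two _ (mk10 ![-2,-2,-2,-2,-1,-1,-1,1,-1,1]) ⟨by decide, by decide⟩
      (by decide)
      (no_zf_one _ v12 v34 v25 v13 v45 (by decide) (by decide) (by decide) (by decide)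
        (by decide) (by decide) (by decide) (by decide) (by decide) (by decide))
  · show zfChromNum petersen (sgn {s(v12, v34), s(v13, v24), s(v14, v23)}) = 1
    have h : IsProperCol petersen (sgn {s(v12, v34), s(v13, v24), s(v14, v23)}) 1
        (mk10 ![-1,-1,-1,1,-1,-1,1,-1,1,1]) ∧
        ∀ v : PV, mk10 ![-1,-1,-1,1,-1,-1,1,-1,1,1] v ≠ 0 :=
      ⟨⟨by decide, by decide⟩, by decide⟩
    refine le_antisymm (Nat.sInf_le ⟨_, h⟩) ?_
    rcases Nat.eq_zero_or_pos
        (zfChromNum petersen (sgn {s(v12, v34), s(v13, v24), s(v14, v23)})) with h0 | h1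
    · rcases Nat.sInf_eq_zero.mp h0 with ⟨κ, hc, hz⟩ | h0
      · exact absurd (show κ v12 = 0 by have := abs_le.mp (hc.1 v12); omega) (hz v12)
      · exact absurd (Set.eq_empty_iff_forall_notMem.mp h0 1 ⟨_, h⟩) (fun c => c)
    · exact h1
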